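/- Let X be a complete separable metric space. For i = 0,1 let ν_i^n, ν_i be Borel probability measures on X with ν_i^n → ν_i weakly, let π^n be a coupling of ν_0^n and ν_1^n converging weakly to a coupling π of ν_0 and ν_1, and let φ : X × X → ℝ be bounded continuous. Suppose there exists a Borel probability measure μ on X such that ν_i^n = ρ_i^n μ and ν_i = ρ_i μ are absolutely continuous with respect to μ, ∫_X |ρ_i^n − ρ_i| dμ → 0 as n → ∞, and f_i : X → ℝ are Borel functions that are μ-essentially bounded, for i = 0,1. Then for i = 0,1: limsup_{n→∞} ∫_{X×X} φ(x₀,x₁)·f_i(x_i) dπ^n(x₀,x₁) ≤ ∫_{X×X} φ(x₀,x₁)·f_i(x_i) dπ(x₀,x₁). -/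

import Mathlib

/-- A bundled mm-space: a complete separable metric space with a Borel probability measure. -/
structure MMSpace where
  X : Type
  [metric : MetricSpace X]
  [cpl : CompleteSpace X]
  [sep : TopologicalSpace.SeparableSpace X]
  [mble : MeasurableSpace X]
  [borel : BorelSpace X]
  μ : MeasureTheory.Measure X
  [prob : MeasureTheory.IsProbabilityMeasure μ]

attribute [instance] MMSpace.metric MMSpace.cpl MMSpace.sep MMSpace.mble MMSpace.borel MMSpace.prob

open MeasureTheory ENNReal Filter Topology Set

noncomputable section

/-- A coupling of two measures on `X` is a measure on `X × X` whose marginals are the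
given measures. -/
def IsCoupling {X : Type*} [MeasurableSpace X] (π : Measure (X × X)) (μ ν : Measure X) : Prop :=
  π.map Prod.fst = μ ∧ π.map Prod.snd = ν

/-- A measure has finite second moment if `∫ d(x,x₀)² dμ < ∞` for some base point. -/
def HasFiniteSecondMoment {X : Type*} [PseudoMetricSpace X] [MeasurableSpace X]
    (μ : Measure X) : Prop :=
  ∃ x₀ : X, ∫⁻ x, ENNReal.ofReal (dist x x₀) ^ 2 ∂μ < ∞

/-- The square-root of the quadratic transport cost of a coupling. -/
def cost2 {X : Type*} [PseudoMetricSpace X] [MeasurableSpace X] (π : Measure (X × X)) : ℝ≥0∞ :=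
  (∫⁻ p, ENNReal.ofReal (dist p.1 p.2) ^ 2 ∂π) ^ (1 / 2 : ℝ)

/-- The 2-Wasserstein distance (valued in `[0,∞]`). -/
def W2 {X : Type*} [PseudoMetricSpace X] [MeasurableSpace X] (μ ν : Measure X) : ℝ≥0∞ :=
  ⨅ (π : Measure (X × X)) (_ : IsCoupling π μ ν), cost2 π

/-- A coupling is optimal if it attains the 2-Wasserstein distance. -/
def IsOptimalCoupling {X : Type*} [PseudoMetricSpace X] [MeasurableSpace X]
    (π : Measure (X × X)) (μ ν : Measure X) : Prop :=
  IsCoupling π μ ν ∧ cost2 π = W2 μ ν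

open Classical in
/-- The Rényi entropy `S_{N',μ}(ν) = ∫ ρ^{1-1/N'} dμ` if `ν = ρμ ≪ μ`, and `∞` otherwise. -/
def renyiEntropy {X : Type*} [MeasurableSpace X] (N' : ℝ) (μ ν : Measure X) : ℝ≥0∞ :=
  if ν ≪ μ then ∫⁻ x, (ν.rnDeriv μ x) ^ (1 - 1 / N') ∂μ else ∞

/-- Weak convergence of a sequence of measures: convergence of integrals of all bounded
continuous functions. -/
def WeakConv {X : Type*} [TopologicalSpace X] [MeasurableSpace X]
    (μs : ℕ → Measure X) (μ : Measure X) : Prop :=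
  ∀ f : BoundedContinuousFunction X ℝ,
    Tendsto (fun n => ∫ x, f x ∂(μs n)) atTop (𝓝 (∫ x, f x ∂μ))

/-- Tightness of a sequence of measures. -/
def IsTightSeq {X : Type*} [TopologicalSpace X] [MeasurableSpace X]
    (μs : ℕ → Measure X) : Prop :=
  ∀ ε : ℝ, 0 < ε → ∃ K : Set X, IsCompact K ∧ ∀ n, μs n Kᶜ < ENNReal.ofReal ε

/-- The function `s_κ`, with the convention `s_κ(0) = 1`. -/
def sKappa (κ θ : ℝ) : ℝ :=
  if θ = 0 then 1
  else if 0 < κ then Real.sin (Real.sqrt κ * θ) / (Real.sqrt κ * θ)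
  else if κ < 0 then Real.sinh (Real.sqrt (-κ) * θ) / (Real.sqrt (-κ) * θ)
  else 1

/-- `ω_κ = π/√κ` for `κ > 0` and `∞` otherwise. -/
def omegaKappa (κ : ℝ) : ℝ≥0∞ :=
  if 0 < κ then ENNReal.ofReal (Real.pi / Real.sqrt κ) else ∞

/-- The coefficient `τ_{K,N}^{(t)}(θ)`, valued in `[0,∞]`. -/
def tauCoeff (K N t θ : ℝ) : ℝ≥0∞ :=
  if ENNReal.ofReal θ < omegaKappa (K / (N - 1)) then
    ENNReal.ofReal (t * (sKappa (K / (N - 1)) (t * θ) / sKappa (K / (N - 1)) θ) ^ (1 - 1 / N))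
  else ∞

/-- The coefficient `σ_κ^{(t)}(θ)`, valued in `[0,∞]`. -/
def sigmaCoeff (κ t θ : ℝ) : ℝ≥0∞ :=
  if ENNReal.ofReal θ < omegaKappa κ then
    ENNReal.ofReal (t * sKappa κ (t * θ) / sKappa κ θ)
  else ∞

/-- The curvature-dimension condition `CD(K,N)` for `N < 0`, for a (probability) measure on a
metric space. -/
def IsCDSpace {X : Type*} [MetricSpace X] [MeasurableSpace X] (K N : ℝ) (μX : Measure X) : Prop :=
  ∀ ν₀ ν₁ : Measure X, IsProbabilityMeasure ν₀ → IsProbabilityMeasure ν₁ →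
    ν₀ ≪ μX → ν₁ ≪ μX →
    HasFiniteSecondMoment ν₀ → HasFiniteSecondMoment ν₁ →
    renyiEntropy N μX ν₀ < ∞ → renyiEntropy N μX ν₁ < ∞ →
    ∃ (νt : ℝ → Measure X) (π : Measure (X × X)),
      νt 0 = ν₀ ∧ νt 1 = ν₁ ∧
      (∀ s ∈ Icc (0:ℝ) 1, ∀ t ∈ Icc (0:ℝ) 1,
        W2 (νt s) (νt t) = ENNReal.ofReal |s - t| * W2 ν₀ ν₁) ∧
      IsOptimalCoupling π ν₀ ν₁ ∧
      (∀ t ∈ Icc (0:ℝ) 1, ∀ N' ∈ Ico N (0:ℝ),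
        renyiEntropy N' μX ν₀ < ∞ → renyiEntropy N' μX ν₁ < ∞ →
        renyiEntropy N' μX (νt t) ≤
          (∫⁻ p, tauCoeff K N' (1 - t) (dist p.1 p.2) * (ν₀.rnDeriv μX p.1) ^ (-(1 / N')) ∂π)
          + ∫⁻ p, tauCoeff K N' t (dist p.1 p.2) * (ν₁.rnDeriv μX p.2) ^ (-(1 / N')) ∂π)

/-- The reduced curvature-dimension condition `CD*(K,N)` for `N < 0`. -/
def IsCDStarSpace {X : Type*} [MetricSpace X] [MeasurableSpace X] (K N : ℝ)
    (μX : Measure X) : Prop :=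
  ∀ ν₀ ν₁ : Measure X, IsProbabilityMeasure ν₀ → IsProbabilityMeasure ν₁ →
    ν₀ ≪ μX → ν₁ ≪ μX →
    HasFiniteSecondMoment ν₀ → HasFiniteSecondMoment ν₁ →
    renyiEntropy N μX ν₀ < ∞ → renyiEntropy N μX ν₁ < ∞ →
    ∃ (νt : ℝ → Measure X) (π : Measure (X × X)),
      νt 0 = ν₀ ∧ νt 1 = ν₁ ∧
      (∀ s ∈ Icc (0:ℝ) 1, ∀ t ∈ Icc (0:ℝ) 1,
        W2 (νt s) (νt t) = ENNReal.ofReal |s - t| * W2 ν₀ ν₁) ∧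
      IsOptimalCoupling π ν₀ ν₁ ∧
      (∀ t ∈ Icc (0:ℝ) 1, ∀ N' ∈ Ico N (0:ℝ),
        renyiEntropy N' μX ν₀ < ∞ → renyiEntropy N' μX ν₁ < ∞ →
        renyiEntropy N' μX (νt t) ≤
          (∫⁻ p, sigmaCoeff (K / N') (1 - t) (dist p.1 p.2)
              * (ν₀.rnDeriv μX p.1) ^ (-(1 / N')) ∂π)
          + ∫⁻ p, sigmaCoeff (K / N') t (dist p.1 p.2)
              * (ν₁.rnDeriv μX p.2) ^ (-(1 / N')) ∂π)

/-- The conditioned (normalized restricted) measure `ν_B`. -/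
def condProb {X : Type*} [MeasurableSpace X] (ν : Measure X) (B : Set X) : Measure X :=
  (ν B)⁻¹ • ν.restrict B

/-- Inverse hyperbolic cosine, `arcosh x = log (x + √(x²-1))`. -/
def acosh (x : ℝ) : ℝ := Real.log (x + Real.sqrt (x ^ 2 - 1))

/-- A parameter of an mm-space: a Borel map `[0,1) → X` pushing the Lebesgue measure to `μ`. -/
def IsParameter (A : MMSpace) (φ : ℝ → A.X) : Prop :=
  Measurable φ ∧ Measure.map φ (volume.restrict (Ico (0:ℝ) 1)) = A.μ

/-- The Ky Fan distance between two measurable functions on `[0,1)`. -/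
def kyFan (f g : ℝ → ℝ) : ℝ :=
  sInf {ε : ℝ | 0 ≤ ε ∧
    (volume.restrict (Ico (0:ℝ) 1)) {x | ε < |f x - g x|} ≤ ENNReal.ofReal ε}

/-- The pullback of the 1-Lipschitz functions on an mm-space by a parameter. -/
def pullLip (A : MMSpace) (φ : ℝ → A.X) : Set (ℝ → ℝ) :=
  {h | ∃ f : A.X → ℝ, LipschitzWith 1 f ∧ h = f ∘ φ}

/-- The Hausdorff distance between two sets of functions with respect to the Ky Fan metric. -/
def hausdorffKF (A B : Set (ℝ → ℝ)) : ℝ :=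
  max (⨆ f ∈ A, ⨅ g ∈ B, kyFan f g) (⨆ g ∈ B, ⨅ f ∈ A, kyFan f g)

/-- The observable distance between two mm-spaces. -/
def dconc (A B : MMSpace) : ℝ :=
  sInf {r : ℝ | ∃ φ ψ, IsParameter A φ ∧ IsParameter B ψ ∧
    r = hausdorffKF (pullLip A φ) (pullLip B ψ)}

end

noncomputable section

/-- The smooth approximation `F_a(x) = a⁻¹ log(e^{ax} + e^{-ax})` of `|x|`. -/
def Fa (a x : ℝ) : ℝ := a⁻¹ * Real.log (Real.exp (a * x) + Real.exp (-(a * x)))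

/-- A (minimizing, constant-speed) geodesic parametrized by `[0,1]`. -/
def IsGeodOn01 {X : Type*} [PseudoMetricSpace X] (γ : ℝ → X) : Prop :=
  ∀ s ∈ Set.Icc (0:ℝ) 1, ∀ s' ∈ Set.Icc (0:ℝ) 1,
    dist (γ s) (γ s') = |s - s'| * dist (γ 0) (γ 1)

end

section AuxUSC

open MeasureTheory Filter Set Topology

private lemma integrable_of_aebdd {Y : Type*} [MeasurableSpace Y] {θ : Measure Y}
    [IsFiniteMeasure θ] {h : Y → ℝ} (hm : AEStronglyMeasurable h θ) {C : ℝ}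
    (hb : ∀ᵐ y ∂θ, |h y| ≤ C) : Integrable h θ :=
  Integrable.mono' (integrable_const C) hm (by simpa [Real.norm_eq_abs] using hb)

private lemma integral_withDensity_ofReal {X : Type*} [MeasurableSpace X]
    {μ : Measure X} {r : X → ℝ} (hr : Measurable r)
    (hrnn : ∀ x, 0 ≤ r x) (h : X → ℝ) :
    ∫ x, h x ∂(μ.withDensity fun x => ENNReal.ofReal (r x)) = ∫ x, r x * h x ∂μ := by
  rw [show (fun x => ENNReal.ofReal (r x)) = fun x => ((Real.toNNReal (r x)) : ENNReal) from rfl,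
    integral_withDensity_eq_integral_smul hr.real_toNNReal h]
  congr 1; funext x
  simp [NNReal.smul_def, Real.coe_toNNReal _ (hrnn x)]

private lemma integrable_density {X : Type*} [MeasurableSpace X]
    {μ : Measure X} {r : X → ℝ}
    (hr : Measurable r) (hrnn : ∀ x, 0 ≤ r x)
    (hp : IsProbabilityMeasure (μ.withDensity fun x => ENNReal.ofReal (r x))) :
    Integrable r μ := by
  refine ⟨hr.aestronglyMeasurable, ?_⟩
  rw [hasFiniteIntegral_iff_ofReal (Eventually.of_forall hrnn)]
  have h1 : ∫⁻ x, ENNReal.ofReal (r x) ∂μ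
      = (μ.withDensity fun x => ENNReal.ofReal (r x)) univ := by
    rw [withDensity_apply _ MeasurableSet.univ, setLIntegral_univ]
  rw [h1, hp.measure_univ]
  exact ENNReal.one_lt_top

set_option maxHeartbeats 1000000 in
private lemma tendsto_integral_bcf_mul_fst {X : Type*} [MetricSpace X] [CompleteSpace X]
    [TopologicalSpace.SeparableSpace X] [MeasurableSpace X] [BorelSpace X]
    (μ : Measure X) [IsProbabilityMeasure μ]
    (ρs : ℕ → X → ℝ) (ρ : X → ℝ)
    (hρsm : ∀ n, Measurable (ρs n)) (hρm : Measurable ρ)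
    (hρsnn : ∀ n x, 0 ≤ ρs n x) (hρnn : ∀ x, 0 ≤ ρ x)
    (hp : ∀ n, IsProbabilityMeasure (μ.withDensity fun x => ENNReal.ofReal (ρs n x)))
    (hq : IsProbabilityMeasure (μ.withDensity fun x => ENNReal.ofReal (ρ x)))
    (hL1 : Tendsto (fun n => ∫ x, |ρs n x - ρ x| ∂μ) atTop (𝓝 0))
    (πs : ℕ → Measure (X × X)) (π : Measure (X × X))
    (hπs : ∀ n, (πs n).map Prod.fst = μ.withDensity fun x => ENNReal.ofReal (ρs n x))
    (hπm : π.map Prod.fst = μ.withDensity fun x => ENNReal.ofReal (ρ x))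
    (hπw : WeakConv πs π)
    (φ : BoundedContinuousFunction (X × X) ℝ)
    (f : X → ℝ) (hfm : Measurable f) (M : ℝ) (hfb : ∀ᵐ x ∂μ, |f x| ≤ M) :
    Tendsto (fun n => ∫ p, φ p * f p.1 ∂(πs n)) atTop (𝓝 (∫ p, φ p * f p.1 ∂π)) := by
  haveI := hq
  set ν' : Measure X := μ.withDensity fun x => ENNReal.ofReal (ρ x) with hν'
  set M' : ℝ := max M 0 with hM'
  have hM'0 : (0:ℝ) ≤ M' := le_max_right _ _
  have hfb' : ∀ᵐ x ∂μ, |f x| ≤ M' := hfb.mono fun x hx => hx.trans (le_max_left _ _)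
  rw [Metric.tendsto_atTop]
  intro ε hε
  have hac : ν' ≪ μ := withDensity_absolutelyContinuous _ _
  have hfbν : ∀ᵐ x ∂ν', |f x| ≤ M' := hfb'.filter_mono hac.ae_le
  have hfint : Integrable f ν' := integrable_of_aebdd hfm.aestronglyMeasurable hfbν
  set C : ℝ := ‖φ‖ + 1 with hC
  have hC0 : (0:ℝ) < C := by positivity
  have hφC : ‖φ‖ < C := by simp [hC]
  set δ : ℝ := ε / (4 * C) with hδ
  have hδ0 : (0:ℝ) < δ := by positivity
  obtain ⟨g, hg, -⟩ := hfint.exists_boundedContinuous_integral_sub_le hδ0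
  have hg' : ∫ x, |f x - g x| ∂ν' ≤ δ := by simpa [Real.norm_eq_abs] using hg
  set ψ : BoundedContinuousFunction (X × X) ℝ :=
    φ * g.compContinuous ⟨Prod.fst, continuous_fst⟩ with hψdef
  have hψapp : ∀ p : X × X, ψ p = φ p * g p.1 := fun p => rfl
  -- key quantitative estimate
  have key : ∀ (θ : Measure (X × X)) (ν : Measure X), θ.map Prod.fst = ν → ν ≪ μ →
      IsProbabilityMeasure ν →
      |(∫ p, φ p * f p.1 ∂θ) - ∫ p, ψ p ∂θ| ≤ ‖φ‖ * ∫ x, |f x - g x| ∂ν := by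
    intro θ ν hmarg hνac hνp
    haveI hθp : IsProbabilityMeasure θ := by
      constructor
      have h1 : θ univ = θ.map Prod.fst univ := by
        rw [Measure.map_apply measurable_fst MeasurableSet.univ, preimage_univ]
      rw [h1, hmarg]
      exact hνp.measure_univ
    have hfbθ : ∀ᵐ p ∂θ, |f p.1| ≤ M' := by
      have hments : MeasurableSet {x : X | |f x| ≤ M'} :=
        measurableSet_le hfm.abs measurable_const
      have hν : ∀ᵐ x ∂ν, |f x| ≤ M' := hfb'.filter_mono hνac.ae_le
      rw [← hmarg] at hν
      exact (ae_map_iff measurable_fst.aemeasurable hments).mp hν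
    have hint1 : Integrable (fun p : X × X => φ p * f p.1) θ := by
      refine integrable_of_aebdd
        ((φ.continuous.measurable.mul (hfm.comp measurable_fst)).aestronglyMeasurable)
        (C := ‖φ‖ * M') (hfbθ.mono fun p hp => ?_)
      rw [abs_mul]
      exact mul_le_mul (by simpa [Real.norm_eq_abs] using φ.norm_coe_le_norm p) hp
        (abs_nonneg _) (norm_nonneg φ)
    have hint2 : Integrable (fun p : X × X => ψ p) θ := ψ.integrable θ
    have hdiff : Integrable (fun p : X × X => φ p * (f p.1 - g p.1)) θ := by
      refine (hint1.sub hint2).congr (Eventually.of_forall fun p => ?_)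
      simp only [hψapp, Pi.sub_apply]; ring
    have hstep : |(∫ p, φ p * f p.1 ∂θ) - ∫ p, ψ p ∂θ|
        = |∫ p, φ p * (f p.1 - g p.1) ∂θ| := by
      rw [← integral_sub hint1 hint2]
      congr 1
      exact integral_congr_ae (Eventually.of_forall fun p => by simp only [hψapp]; ring)
    rw [hstep]
    have habs : |∫ p, φ p * (f p.1 - g p.1) ∂θ| ≤ ∫ p, |φ p| * |f p.1 - g p.1| ∂θ := by
      simpa [Real.norm_eq_abs, abs_mul] using
        norm_integral_le_integral_norm (μ := θ) (fun p : X × X => φ p * (f p.1 - g p.1))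
    have hfsub : Integrable (fun p : X × X => |f p.1 - g p.1|) θ := by
      refine integrable_of_aebdd
        (((hfm.comp measurable_fst).sub
          (g.continuous.measurable.comp measurable_fst)).abs.aestronglyMeasurable)
        (C := M' + ‖g‖) (hfbθ.mono fun p hp => ?_)
      rw [abs_abs]
      calc |f p.1 - g p.1| ≤ |f p.1| + |g p.1| := abs_sub _ _
        _ ≤ M' + ‖g‖ := add_le_add hp
            (by simpa [Real.norm_eq_abs] using g.norm_coe_le_norm p.1)
    have hdabs : Integrable (fun p : X × X => |φ p| * |f p.1 - g p.1|) θ :=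
      hdiff.abs.congr (Eventually.of_forall fun p => abs_mul _ _)
    have hmono : ∫ p, |φ p| * |f p.1 - g p.1| ∂θ ≤ ∫ p, ‖φ‖ * |f p.1 - g p.1| ∂θ := by
      refine integral_mono hdabs (hfsub.const_mul _) fun p => ?_
      exact mul_le_mul_of_nonneg_right
        (by simpa [Real.norm_eq_abs] using φ.norm_coe_le_norm p) (abs_nonneg _)
    have hmap : ∫ p, |f p.1 - g p.1| ∂θ = ∫ x, |f x - g x| ∂ν := by
      rw [← hmarg, integral_map (f := fun x => |f x - g x|) measurable_fst.aemeasurable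
        ((hfm.sub g.continuous.measurable).abs.aestronglyMeasurable)]
    calc |∫ p, φ p * (f p.1 - g p.1) ∂θ|
        ≤ ∫ p, |φ p| * |f p.1 - g p.1| ∂θ := habs
      _ ≤ ∫ p, ‖φ‖ * |f p.1 - g p.1| ∂θ := hmono
      _ = ‖φ‖ * ∫ p, |f p.1 - g p.1| ∂θ := integral_const_mul _ _
      _ = ‖φ‖ * ∫ x, |f x - g x| ∂ν := by rw [hmap]
  -- choose thresholds
  set D : ℝ := M' + ‖g‖ + 1 with hD
  have hD0 : (0:ℝ) < D := by positivity
  set δ' : ℝ := ε / (4 * C * D) with hδ'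
  have hδ'0 : (0:ℝ) < δ' := by positivity
  obtain ⟨N₁, hN₁⟩ := Metric.tendsto_atTop.mp (hπw ψ) (ε / 4) (by positivity)
  obtain ⟨N₂, hN₂⟩ := Metric.tendsto_atTop.mp hL1 δ' hδ'0
  refine ⟨max N₁ N₂, fun n hn => ?_⟩
  have hn1 : |(∫ p, ψ p ∂(πs n)) - ∫ p, ψ p ∂π| < ε / 4 := by
    have := hN₁ n (le_of_max_le_left hn)
    rwa [Real.dist_eq] at this
  set en : ℝ := ∫ x, |ρs n x - ρ x| ∂μ with hen
  have e0 : (0:ℝ) ≤ en := integral_nonneg fun x => abs_nonneg _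
  have hn2 : en < δ' := by
    have := hN₂ n (le_of_max_le_right hn)
    rwa [Real.dist_eq, sub_zero, abs_of_nonneg e0] at this
  -- bound ∫ |f-g| dν_n
  have hρnint : Integrable (ρs n) μ := integrable_density (hρsm n) (hρsnn n) (hp n)
  have hρint : Integrable ρ μ := integrable_density hρm hρnn hq
  have habsint : Integrable (fun x => |ρs n x - ρ x|) μ := (hρnint.sub hρint).abs
  have hbd : ∀ᵐ x ∂μ, |f x - g x| ≤ M' + ‖g‖ := hfb'.mono fun x hx => by
    calc |f x - g x| ≤ |f x| + |g x| := abs_sub _ _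
      _ ≤ M' + ‖g‖ := add_le_add hx (by simpa [Real.norm_eq_abs] using g.norm_coe_le_norm x)
  have hfg_meas : Measurable fun x => |f x - g x| := (hfm.sub g.continuous.measurable).abs
  have hint_a : Integrable (fun x => ρs n x * |f x - g x|) μ := by
    refine Integrable.mono' (hρnint.const_mul (M' + ‖g‖))
      ((hρsm n).mul hfg_meas).aestronglyMeasurable (hbd.mono fun x hx => ?_)
    rw [Real.norm_eq_abs, abs_mul, abs_of_nonneg (hρsnn n x), abs_abs]
    calc ρs n x * |f x - g x| ≤ ρs n x * (M' + ‖g‖) :=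
          mul_le_mul_of_nonneg_left hx (hρsnn n x)
      _ = (M' + ‖g‖) * ρs n x := mul_comm _ _
  have hint_b : Integrable (fun x => ρ x * |f x - g x|) μ := by
    refine Integrable.mono' (hρint.const_mul (M' + ‖g‖))
      (hρm.mul hfg_meas).aestronglyMeasurable (hbd.mono fun x hx => ?_)
    rw [Real.norm_eq_abs, abs_mul, abs_of_nonneg (hρnn x), abs_abs]
    calc ρ x * |f x - g x| ≤ ρ x * (M' + ‖g‖) := mul_le_mul_of_nonneg_left hx (hρnn x)
      _ = (M' + ‖g‖) * ρ x := mul_comm _ _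
  have hptwise : ∀ᵐ x ∂μ, ρs n x * |f x - g x|
      ≤ ρ x * |f x - g x| + (M' + ‖g‖) * |ρs n x - ρ x| := hbd.mono fun x hx => by
    nlinarith [mul_le_mul_of_nonneg_right (le_abs_self (ρs n x - ρ x)) (abs_nonneg (f x - g x)),
      mul_le_mul_of_nonneg_left hx (abs_nonneg (ρs n x - ρ x))]
  have hνn_bound : ∫ x, |f x - g x| ∂(μ.withDensity fun x => ENNReal.ofReal (ρs n x))
      ≤ δ + (M' + ‖g‖) * en := by
    rw [integral_withDensity_ofReal (hρsm n) (hρsnn n)]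
    calc ∫ x, ρs n x * |f x - g x| ∂μ
        ≤ ∫ x, (ρ x * |f x - g x| + (M' + ‖g‖) * |ρs n x - ρ x|) ∂μ :=
          integral_mono_ae hint_a (hint_b.add (habsint.const_mul _)) hptwise
      _ = (∫ x, ρ x * |f x - g x| ∂μ) + (M' + ‖g‖) * en := by
          rw [integral_add hint_b (habsint.const_mul _), integral_const_mul]
      _ ≤ δ + (M' + ‖g‖) * en := by
          have : ∫ x, ρ x * |f x - g x| ∂μ ≤ δ := by
            rw [← integral_withDensity_ofReal hρm hρnn]
            exact hg'
          linarith
  have hk1 : |(∫ p, φ p * f p.1 ∂(πs n)) - ∫ p, ψ p ∂(πs n)|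
      ≤ ‖φ‖ * (δ + (M' + ‖g‖) * en) :=
    (key (πs n) _ (hπs n) (withDensity_absolutelyContinuous _ _) (hp n)).trans
      (mul_le_mul_of_nonneg_left hνn_bound (norm_nonneg φ))
  have hk2 : |(∫ p, φ p * f p.1 ∂π) - ∫ p, ψ p ∂π| ≤ ‖φ‖ * δ :=
    (key π ν' hπm hac hq).trans (mul_le_mul_of_nonneg_left hg' (norm_nonneg φ))
  rw [Real.dist_eq]
  set a := ∫ p, φ p * f p.1 ∂(πs n)
  set b := ∫ p, ψ p ∂(πs n)
  set c := ∫ p, ψ p ∂π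
  set d := ∫ p, φ p * f p.1 ∂π
  have tri : |a - d| ≤ |a - b| + |b - c| + |c - d| := by
    calc |a - d| ≤ |a - b| + |b - d| := abs_sub_le a b d
      _ ≤ |a - b| + (|b - c| + |c - d|) := by linarith [abs_sub_le b c d]
      _ = |a - b| + |b - c| + |c - d| := by ring
  have hcd : |c - d| ≤ ‖φ‖ * δ := by rw [abs_sub_comm]; exact hk2
  have hφ0 : (0:ℝ) ≤ ‖φ‖ := norm_nonneg φ
  have hMg0 : (0:ℝ) ≤ M' + ‖g‖ := by positivity
  have hMgD : M' + ‖g‖ < D := by rw [hD]; exact lt_add_one _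
  have hCne : C ≠ 0 := ne_of_gt hC0
  have hDne : D ≠ 0 := ne_of_gt hD0
  have hδval : C * δ = ε / 4 := by rw [hδ]; field_simp
  have hδ'val : C * (D * δ') = ε / 4 := by rw [hδ']; field_simp
  have A1 : ‖φ‖ * δ < ε / 4 :=
    (mul_lt_mul_of_pos_right hφC hδ0).trans_eq hδval
  have A2 : ‖φ‖ * ((M' + ‖g‖) * en) < ε / 4 := by
    have h1 : ‖φ‖ * ((M' + ‖g‖) * en) ≤ C * (D * en) := by
      have := mul_le_mul hMgD.le (le_refl en) e0 hD0.le
      exact mul_le_mul hφC.le (mul_le_mul hMgD.le (le_refl en) e0 hD0.le)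
        (by positivity) hC0.le
    have h2 : C * (D * en) < C * (D * δ') :=
      mul_lt_mul_of_pos_left (mul_lt_mul_of_pos_left hn2 hD0) hC0
    exact (h1.trans_lt h2).trans_eq hδ'val
  nlinarith [tri, hk1, hcd, hn1, A1, A2, abs_nonneg (a - b), abs_nonneg (b - c),
    abs_nonneg (c - d)]

end AuxUSC

open MeasureTheory Filter Set in
/-- Upper semicontinuity of integrals `∫ φ(x₀,x₁) fᵢ(xᵢ) dπⁿ` along weakly
convergent couplings, when the marginals have densities converging in `L¹(μ)` and the `fᵢ`
are `μ`-essentially bounded. -/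
theorem integral_limsup_of_L1_densities {X : Type*} [MetricSpace X] [CompleteSpace X]
    [TopologicalSpace.SeparableSpace X] [MeasurableSpace X] [BorelSpace X]
    (μ : Measure X) [IsProbabilityMeasure μ]
    (ρ0s ρ1s : ℕ → X → ℝ) (ρ0 ρ1 : X → ℝ)
    (hρ0sm : ∀ n, Measurable (ρ0s n)) (hρ1sm : ∀ n, Measurable (ρ1s n))
    (hρ0m : Measurable ρ0) (hρ1m : Measurable ρ1)
    (hρ0snn : ∀ n x, 0 ≤ ρ0s n x) (hρ1snn : ∀ n x, 0 ≤ ρ1s n x)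
    (hρ0nn : ∀ x, 0 ≤ ρ0 x) (hρ1nn : ∀ x, 0 ≤ ρ1 x)
    (hp0 : ∀ n, IsProbabilityMeasure (μ.withDensity fun x => ENNReal.ofReal (ρ0s n x)))
    (hp1 : ∀ n, IsProbabilityMeasure (μ.withDensity fun x => ENNReal.ofReal (ρ1s n x)))
    (hq0 : IsProbabilityMeasure (μ.withDensity fun x => ENNReal.ofReal (ρ0 x)))
    (hq1 : IsProbabilityMeasure (μ.withDensity fun x => ENNReal.ofReal (ρ1 x)))
    (hw0 : WeakConv (fun n => μ.withDensity fun x => ENNReal.ofReal (ρ0s n x))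
      (μ.withDensity fun x => ENNReal.ofReal (ρ0 x)))
    (hw1 : WeakConv (fun n => μ.withDensity fun x => ENNReal.ofReal (ρ1s n x))
      (μ.withDensity fun x => ENNReal.ofReal (ρ1 x)))
    (hL10 : Tendsto (fun n => ∫ x, |ρ0s n x - ρ0 x| ∂μ) atTop (nhds 0))
    (hL11 : Tendsto (fun n => ∫ x, |ρ1s n x - ρ1 x| ∂μ) atTop (nhds 0))
    (πs : ℕ → Measure (X × X)) (π : Measure (X × X))
    (hπs : ∀ n, IsCoupling (πs n) (μ.withDensity fun x => ENNReal.ofReal (ρ0s n x))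
      (μ.withDensity fun x => ENNReal.ofReal (ρ1s n x)))
    (hπ : IsCoupling π (μ.withDensity fun x => ENNReal.ofReal (ρ0 x))
      (μ.withDensity fun x => ENNReal.ofReal (ρ1 x)))
    (hπw : WeakConv πs π)
    (φ : BoundedContinuousFunction (X × X) ℝ)
    (f0 f1 : X → ℝ) (hf0m : Measurable f0) (hf1m : Measurable f1)
    (hf0b : ∃ M : ℝ, ∀ᵐ x ∂μ, |f0 x| ≤ M) (hf1b : ∃ M : ℝ, ∀ᵐ x ∂μ, |f1 x| ≤ M) :
    (limsup (fun n => ∫ p, φ p * f0 p.1 ∂(πs n)) atTop ≤ ∫ p, φ p * f0 p.1 ∂π) ∧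
    (limsup (fun n => ∫ p, φ p * f1 p.2 ∂(πs n)) atTop ≤ ∫ p, φ p * f1 p.2 ∂π) := by
  obtain ⟨M0, hM0⟩ := hf0b
  obtain ⟨M1, hM1⟩ := hf1b
  constructor
  · have h := tendsto_integral_bcf_mul_fst μ ρ0s ρ0 hρ0sm hρ0m hρ0snn hρ0nn hp0 hq0 hL10
      πs π (fun n => (hπs n).1) hπ.1 hπw φ f0 hf0m M0 hM0
    exact h.limsup_eq.le
  · set sc : C(X × X, X × X) := ⟨Prod.swap, continuous_swap⟩ with hsc
    have hswap_meas : Measurable (Prod.swap : X × X → X × X) := measurable_swap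
    have hmapfst : ∀ θ : Measure (X × X),
        (θ.map Prod.swap).map Prod.fst = θ.map Prod.snd := by
      intro θ
      rw [Measure.map_map measurable_fst hswap_meas]
      rfl
    have hπw' : WeakConv (fun n => (πs n).map Prod.swap) (π.map Prod.swap) := by
      intro h
      have he : ∀ θ : Measure (X × X),
          ∫ p, h p ∂(θ.map Prod.swap) = ∫ p, (h.compContinuous sc) p ∂θ := fun θ =>
        integral_map hswap_meas.aemeasurable h.continuous.measurable.aestronglyMeasurable
      simp only [he]
      exact hπw (h.compContinuous sc)
    have h := tendsto_integral_bcf_mul_fst μ ρ1s ρ1 hρ1sm hρ1m hρ1snn hρ1nn hp1 hq1 hL11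
      (fun n => (πs n).map Prod.swap) (π.map Prod.swap)
      (fun n => (hmapfst (πs n)).trans (hπs n).2) ((hmapfst π).trans hπ.2) hπw'
      (φ.compContinuous sc) f1 hf1m M1 hM1
    have he2 : ∀ θ : Measure (X × X),
        ∫ p, (φ.compContinuous sc) p * f1 p.1 ∂(θ.map Prod.swap)
          = ∫ p, φ p * f1 p.2 ∂θ := by
      intro θ
      have hms : Measurable fun p : X × X => (φ.compContinuous sc) p * f1 p.1 :=
        (φ.compContinuous sc).continuous.measurable.mul (hf1m.comp measurable_fst)
      rw [integral_map hswap_meas.aemeasurable hms.aestronglyMeasurable]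
      rfl
    simp only [he2] at h
    exact h.limsup_eq.le
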